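/- Let G be a finite simple graph and M a matching of G. Let u and z be distinct free vertices such that every neighbour of u is matched by M and every neighbour of z is matched by M. Suppose v is a neighbour of u, (v,y) ∈ M, and z is a neighbour of y. Then M′ := (M ∖ {(v,y)}) ∪ {(u,v), (y,z)} is a matching of G with |M′| = |M| + 1, and no 3-length augmenting path with respect to M′ contains the vertex u or the vertex z. -/

import Mathlib

/-- `M` is a matching of `G`: a set of edges of `G`, no two of which share a vertex. -/
def IsMatching {V : Type*} (G : SimpleGraph V) (M : Set (Sym2 V)) : Prop :=
  M ⊆ G.edgeSet ∧ ∀ e ∈ M, ∀ f ∈ M, e ≠ f → ∀ v : V, v ∈ e → v ∉ f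

/-- A vertex is matched by `M` if it lies on some edge of `M`. -/
def MatchedBy {V : Type*} (M : Set (Sym2 V)) (v : V) : Prop := ∃ e ∈ M, v ∈ e

/-- `u–v–x–y` is a 3-length augmenting path with respect to `M`: four distinct vertices,
`u` and `y` free, `(u,v)` and `(x,y)` edges of `G` not in `M`, and matched middle edge
`(v,x) ∈ M`. -/
def ThreeAugPath {V : Type*} (G : SimpleGraph V) (M : Set (Sym2 V)) (u v x y : V) : Prop :=
  u ≠ v ∧ u ≠ x ∧ u ≠ y ∧ v ≠ x ∧ v ≠ y ∧ x ≠ y ∧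
  ¬ MatchedBy M u ∧ ¬ MatchedBy M y ∧
  G.Adj u v ∧ G.Adj x y ∧ s(u, v) ∉ M ∧ s(x, y) ∉ M ∧ s(v, x) ∈ M

/-- Augmenting along the 3-length augmenting path `u–v–y–z` when both free endpoints
`u` and `z` have no free neighbours yields a matching of size `|M| + 1`, and no
3-length augmenting path with respect to the new matching contains `u` or `z`. -/
theorem fix_three_aug_path_no_new_aug_path
    {V : Type*} [Fintype V] (G : SimpleGraph V) (M : Set (Sym2 V)) (hM : IsMatching G M)
    (u z v y : V) (huz : u ≠ z)
    (hu : ¬ MatchedBy M u) (hz : ¬ MatchedBy M z)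
    (hunbr : ∀ w : V, G.Adj u w → MatchedBy M w)
    (hznbr : ∀ w : V, G.Adj z w → MatchedBy M w)
    (huv : G.Adj u v) (hvy : s(v, y) ∈ M) (hyz : G.Adj y z) :
    IsMatching G ((M \ {s(v, y)}) ∪ {s(u, v), s(y, z)}) ∧
    ((M \ {s(v, y)}) ∪ {s(u, v), s(y, z)}).ncard = M.ncard + 1 ∧
    ∀ a b c d : V, ThreeAugPath G ((M \ {s(v, y)}) ∪ {s(u, v), s(y, z)}) a b c d →
      u ∉ ({a, b, c, d} : Set V) ∧ z ∉ ({a, b, c, d} : Set V) := by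
  have hGvy : G.Adj v y := hM.1 hvy
  have hvyne : v ≠ y := hGvy.ne
  have huvne : u ≠ v := huv.ne
  have hyzne : y ≠ z := hyz.ne
  have huy : u ≠ y := fun h => hu ⟨s(v, y), hvy, by rw [h]; simp⟩
  have hvz : v ≠ z := fun h => hz ⟨s(v, y), hvy, by rw [← h]; simp⟩
  have huvM : s(u, v) ∉ M := fun h => hu ⟨_, h, by simp⟩
  have hyzM : s(y, z) ∉ M := fun h => hz ⟨_, h, by simp⟩
  have h4 : ∀ e ∈ M \ {s(v, y)}, u ∉ e ∧ v ∉ e ∧ y ∉ e ∧ z ∉ e := by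
    rintro e ⟨heM, hene⟩
    refine ⟨fun h => hu ⟨e, heM, h⟩, ?_, ?_, fun h => hz ⟨e, heM, h⟩⟩
    · exact hM.2 s(v, y) hvy e heM (fun h => hene (Set.mem_singleton_iff.mpr h.symm)) v
        (by simp)
    · exact hM.2 s(v, y) hvy e heM (fun h => hene (Set.mem_singleton_iff.mpr h.symm)) y
        (by simp)
  have hpairmem : ∀ f ∈ ({s(u, v), s(y, z)} : Set (Sym2 V)), f = s(u, v) ∨ f = s(y, z) := by
    intro f hf; simpa using hf
  refine ⟨⟨?_, ?_⟩, ?_, ?_⟩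
  · -- subset of edgeSet
    intro e he
    rcases he with ⟨heM, _⟩ | he
    · exact hM.1 heM
    · rcases hpairmem e he with rfl | rfl
      · exact huv
      · exact hyz
  · -- pairwise disjoint
    intro e he f hf hef w hwe hwf
    rcases he with heD | he
    · rcases hf with hfD | hf
      · exact hM.2 e heD.1 f hfD.1 hef w hwe hwf
      · obtain ⟨h1, h2, h3, h4'⟩ := h4 e heD
        rcases hpairmem f hf with rfl | rfl
        · rcases Sym2.mem_iff.mp hwf with rfl | rfl
          · exact h1 hwe
          · exact h2 hwe
        · rcases Sym2.mem_iff.mp hwf with rfl | rfl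
          · exact h3 hwe
          · exact h4' hwe
    · rcases hf with hfD | hf
      · obtain ⟨h1, h2, h3, h4'⟩ := h4 f hfD
        rcases hpairmem e he with rfl | rfl
        · rcases Sym2.mem_iff.mp hwe with rfl | rfl
          · exact h1 hwf
          · exact h2 hwf
        · rcases Sym2.mem_iff.mp hwe with rfl | rfl
          · exact h3 hwf
          · exact h4' hwf
      · rcases hpairmem e he with rfl | rfl <;> rcases hpairmem f hf with rfl | rfl
        · exact hef rfl
        · rcases Sym2.mem_iff.mp hwe with rfl | rfl <;>
            rcases Sym2.mem_iff.mp hwf with h | h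
          · exact huy h
          · exact huz h
          · exact hvyne h
          · exact hvz h
        · rcases Sym2.mem_iff.mp hwe with rfl | rfl <;>
            rcases Sym2.mem_iff.mp hwf with h | h
          · exact huy h.symm
          · exact hvyne h.symm
          · exact huz h.symm
          · exact hvz h.symm
        · exact hef rfl
  · -- cardinality
    have hfin : M.Finite := Set.toFinite M
    have key : (M \ {s(v, y)}) ∪ {s(u, v), s(y, z)}
        = insert s(u, v) (insert s(y, z) (M \ {s(v, y)})) := by
      rw [Set.union_comm, Set.insert_union, Set.singleton_union]
    have hsneq : s(u, v) ≠ s(y, z) := by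
      intro h
      rcases Sym2.eq_iff.mp h with ⟨h1, _⟩ | ⟨h1, _⟩
      · exact huy h1
      · exact huz h1
    have h1 : s(u, v) ∉ insert s(y, z) (M \ {s(v, y)}) := by
      intro h
      rcases h with h | ⟨h, _⟩
      · exact hsneq h
      · exact huvM h
    have h2 : s(y, z) ∉ M \ {s(v, y)} := fun h => hyzM h.1
    have hpos : 0 < M.ncard := (Set.ncard_pos hfin).mpr ⟨_, hvy⟩
    rw [key, Set.ncard_insert_of_notMem h1 (hfin.diff.insert _),
      Set.ncard_insert_of_notMem h2 hfin.diff,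
      Set.ncard_diff_singleton_of_mem hvy]
    omega
  · -- no 3-aug path through u or z
    have huM' : MatchedBy ((M \ {s(v, y)}) ∪ {s(u, v), s(y, z)}) u :=
      ⟨s(u, v), Or.inr (by simp), by simp⟩
    have hzM' : MatchedBy ((M \ {s(v, y)}) ∪ {s(u, v), s(y, z)}) z :=
      ⟨s(y, z), Or.inr (by simp), by simp⟩
    have hunbr' : ∀ w : V, G.Adj u w →
        MatchedBy ((M \ {s(v, y)}) ∪ {s(u, v), s(y, z)}) w := by
      intro w hw
      obtain ⟨e, heM, hwe⟩ := hunbr w hw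
      by_cases he : e = s(v, y)
      · subst he
        rcases Sym2.mem_iff.mp hwe with h | h
        · exact ⟨s(u, v), Or.inr (by simp), by rw [h]; simp⟩
        · exact ⟨s(y, z), Or.inr (by simp), by rw [h]; simp⟩
      · exact ⟨e, Or.inl ⟨heM, he⟩, hwe⟩
    have hznbr' : ∀ w : V, G.Adj z w →
        MatchedBy ((M \ {s(v, y)}) ∪ {s(u, v), s(y, z)}) w := by
      intro w hw
      obtain ⟨e, heM, hwe⟩ := hznbr w hw
      by_cases he : e = s(v, y)
      · subst he
        rcases Sym2.mem_iff.mp hwe with h | h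
        · exact ⟨s(u, v), Or.inr (by simp), by rw [h]; simp⟩
        · exact ⟨s(y, z), Or.inr (by simp), by rw [h]; simp⟩
      · exact ⟨e, Or.inl ⟨heM, he⟩, hwe⟩
    intro a b c d hpath
    obtain ⟨hab, hac, had, hbc, hbd, hcd, hfa, hfd, hAab, hAcd, _, _, _⟩ := hpath
    constructor <;> intro hmem <;>
      simp only [Set.mem_insert_iff, Set.mem_singleton_iff] at hmem <;>
      rcases hmem with rfl | rfl | rfl | rfl
    · exact hfa huM'
    · exact hfa (hunbr' a hAab.symm)
    · exact hfd (hunbr' d hAcd)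
    · exact hfd huM'
    · exact hfa hzM'
    · exact hfa (hznbr' a hAab.symm)
    · exact hfd (hznbr' d hAcd)
    · exact hfd hzM'
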